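/- Let c ≥ 2, ñ ≥ 3, n = cñ, and let W̄_{P^u} and W̄_{P^r} be the uniform-gossiping and effective-resistance gossiping matrices of the c-barbell graph. Then the conductances of the two induced Markov chains are Φ(W̄_{P^u}) = 1/(⌊c/2⌋ · c · ñ³) and Φ(W̄_{P^r}) = 1/(2·⌊c/2⌋ · ñ · (cñ − 1)). -/

import Mathlib

open Matrix BigOperators Finset

/-- The `c`-barbell graph on `c*tn` vertices (0-indexed): for each `k = 0,…,c−1` the block
`B_k = {k*tn,…,(k+1)*tn−1}` induces a complete graph (two vertices are in the same block iff
their values have the same quotient by `tn`), and for each `k = 1,…,c−1` there is a bridge edge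
between vertex `k*tn − 1` and vertex `k*tn` (i.e. between consecutive vertices `i, i+1` with
`(i+1) % tn = 0`). -/
def cBarbell (c tn : ℕ) : SimpleGraph (Fin (c * tn)) where
  Adj i j := i ≠ j ∧ (i.val / tn = j.val / tn ∨
    (j.val = i.val + 1 ∧ (i.val + 1) % tn = 0) ∨
    (i.val = j.val + 1 ∧ (j.val + 1) % tn = 0))
  symm := by
    constructor
    rintro i j ⟨hne, h⟩
    refine ⟨hne.symm, ?_⟩
    rcases h with h | h | h
    · exact Or.inl h.symm
    · exact Or.inr (Or.inr h)
    · exact Or.inr (Or.inl h)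
  loopless := by constructor; rintro i ⟨hne, -⟩; exact hne rfl

instance (c tn : ℕ) : DecidableRel (cBarbell c tn).Adj := fun i j =>
  inferInstanceAs (Decidable (i ≠ j ∧ (i.val / tn = j.val / tn ∨
    (j.val = i.val + 1 ∧ (i.val + 1) % tn = 0) ∨
    (i.val = j.val + 1 ∧ (j.val + 1) % tn = 0))))

/-- The uniform edge-activation probability matrix: `P^u_{ij} = 1/(n d_i)` on edges, `0` else. -/
noncomputable def probUnif {n : ℕ} (G : SimpleGraph (Fin n)) [DecidableRel G.Adj] :
    Matrix (Fin n) (Fin n) ℝ :=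
  Matrix.of fun i j => if G.Adj i j then 1 / ((n : ℝ) * (G.degree i : ℝ)) else 0

/-- The uniform-gossiping matrix `W̄_{P^u} = I − D^u/2 + (P^u + (P^u)ᵀ)/2`, where
`D^u_{ii} = Σ_j (P^u_{ij} + P^u_{ji})`. -/
noncomputable def gossipUnif {n : ℕ} (G : SimpleGraph (Fin n)) [DecidableRel G.Adj] :
    Matrix (Fin n) (Fin n) ℝ :=
  (1 : Matrix (Fin n) (Fin n) ℝ)
    - (1 / 2 : ℝ) • Matrix.diagonal (fun i => ∑ j, (probUnif G i j + probUnif G j i))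
    + (1 / 2 : ℝ) • (probUnif G + (probUnif G)ᵀ)

/-- The effective-resistance edge-activation probabilities on the `c`-barbell graph with
`n = c*tn`: `1/(2(n−1))` on bridge edges, `1/(tn(n−1))` on edges within a block, `0` else. -/
noncomputable def probResCBarbell (c tn : ℕ) : Matrix (Fin (c * tn)) (Fin (c * tn)) ℝ :=
  Matrix.of fun i j =>
    if (cBarbell c tn).Adj i j then
      (if i.val / tn = j.val / tn then 1 / ((tn : ℝ) * ((c : ℝ) * (tn : ℝ) - 1))
       else 1 / (2 * ((c : ℝ) * (tn : ℝ) - 1)))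
    else 0

/-- The effective-resistance gossiping matrix `W̄_{P^r} = I − D^r/2 + P^r` of the `c`-barbell
graph, where `D^r_{ii} = 2 Σ_j P^r_{ij}`. -/
noncomputable def gossipResCBarbell (c tn : ℕ) : Matrix (Fin (c * tn)) (Fin (c * tn)) ℝ :=
  (1 : Matrix (Fin (c * tn)) (Fin (c * tn)) ℝ)
    - (1 / 2 : ℝ) • Matrix.diagonal (fun i => 2 * ∑ j, probResCBarbell c tn i j)
    + probResCBarbell c tn

/-- The set of conductance values `Φ_S(W)` over nonempty proper subsets `S`, where
`Φ_S(W) = (Σ_{i∈S, j∉S} W_{ij}) / min(|S|, n−|S|)`. -/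
def conductanceValues {n : ℕ} (W : Matrix (Fin n) (Fin n) ℝ) : Set ℝ :=
  {x : ℝ | ∃ S : Finset (Fin n), S.Nonempty ∧ S ≠ Finset.univ ∧
    x = (∑ i ∈ S, ∑ j ∈ Sᶜ, W i j) / ((min S.card (n - S.card) : ℕ) : ℝ)}

lemma nat_div_eq_iff {tn : ℕ} (h : 0 < tn) {j k : ℕ} :
    j / tn = k ↔ k * tn ≤ j ∧ j < k * tn + tn := by
  have h2 : j / tn < k + 1 ↔ j < (k+1) * tn := Nat.div_lt_iff_lt_mul h
  have h3 : k ≤ j / tn ↔ k * tn ≤ j := Nat.le_div_iff_mul_le h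
  have : (k+1) * tn = k * tn + tn := by ring
  omega

lemma block_card (c tn : ℕ) (h : 0 < tn) {k : ℕ} (hk : k < c) :
    (Finset.univ.filter fun j : Fin (c * tn) => j.val / tn = k).card = tn := by
  have key : (Finset.univ.filter fun j : Fin (c * tn) => j.val / tn = k).card
      = (Finset.univ : Finset (Fin tn)).card := by
    refine Finset.card_bij' (fun j hj => (⟨j.val - k * tn, by
        have h2 := (nat_div_eq_iff h).mp (Finset.mem_filter.mp hj).2
        omega⟩ : Fin tn)) (fun x _ => (⟨k * tn + x.val, by
        have hx := x.isLt
        have h3 : (k+1) * tn ≤ c * tn := Nat.mul_le_mul_right _ hk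
        have : (k+1) * tn = k * tn + tn := by ring
        omega⟩ : Fin (c * tn))) ?_ ?_ ?_ ?_
    · intro a ha; exact Finset.mem_univ _
    · intro x hx
      refine Finset.mem_filter.mpr ⟨Finset.mem_univ _, ?_⟩
      dsimp only
      have := x.isLt
      exact (nat_div_eq_iff h).mpr ⟨by omega, by omega⟩
    · intro a ha
      have h2 := (nat_div_eq_iff h).mp (Finset.mem_filter.mp ha).2
      apply Fin.ext; simp; omega
    · intro x hx; apply Fin.ext; simp
  simpa using key

lemma card_lt_filter (c tn m : ℕ) (hm : m ≤ c * tn) :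
    (Finset.univ.filter fun i : Fin (c * tn) => i.val < m).card = m := by
  have key : (Finset.univ.filter fun i : Fin (c * tn) => i.val < m).card
      = (Finset.univ : Finset (Fin m)).card := by
    refine Finset.card_bij' (fun j hj => (⟨j.val, (Finset.mem_filter.mp hj).2⟩ : Fin m))
      (fun x _ => (⟨x.val, lt_of_lt_of_le x.isLt hm⟩ : Fin (c * tn))) ?_ ?_ ?_ ?_
    · intro a ha; exact Finset.mem_univ _
    · intro x hx; exact Finset.mem_filter.mpr ⟨Finset.mem_univ _, x.isLt⟩
    · intro a ha; apply Fin.ext; simp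
    · intro x hx; apply Fin.ext; simp
  simpa using key

lemma flip_lemma {P : ℕ → Prop} {a b : ℕ} (h : a < b) (ha : P a) (hb : ¬ P b) :
    ∃ k, a ≤ k ∧ k < b ∧ P k ∧ ¬ P (k + 1) := by
  induction b with
  | zero => omega
  | succ b ih =>
    rcases Nat.lt_succ_iff_lt_or_eq.mp h with h' | h'
    · by_cases hPb : P b
      · exact ⟨b, by omega, by omega, hPb, hb⟩
      · obtain ⟨k, hk1, hk2, hk3, hk4⟩ := ih h' hPb
        exact ⟨k, hk1, by omega, hk3, hk4⟩
    · exact ⟨a, le_refl _, h, ha, h' ▸ hb⟩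

lemma mod_succ_div {tn x : ℕ} (h : 0 < tn) (hx : (x + 1) % tn = 0) :
    x + 1 = ((x + 1) / tn) * tn ∧ 1 ≤ (x + 1) / tn ∧ x / tn = (x + 1) / tn - 1 := by
  have hd : tn ∣ (x + 1) := Nat.dvd_of_mod_eq_zero hx
  have h1 : ((x + 1) / tn) * tn = x + 1 := Nat.div_mul_cancel hd
  have hm : tn ≤ x + 1 := Nat.le_of_dvd (by omega) hd
  have hm1 : 1 ≤ (x + 1) / tn := (Nat.le_div_iff_mul_le h).mpr (by omega)
  refine ⟨h1.symm, hm1, ?_⟩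
  have h2 : ((x + 1) / tn - 1) * tn = ((x + 1) / tn) * tn - tn := by
    rw [Nat.sub_mul, one_mul]
  exact (nat_div_eq_iff h).mpr (by omega)

lemma not_both_bridge {tn v : ℕ} (h3 : 3 ≤ tn) (h1 : (v + 1) % tn = 0) (h2 : v % tn = 0) :
    False := by
  have d1 : tn ∣ v + 1 := Nat.dvd_of_mod_eq_zero h1
  have d2 : tn ∣ v := Nat.dvd_of_mod_eq_zero h2
  have : tn ∣ 1 := by simpa using Nat.dvd_sub d1 d2
  have := Nat.le_of_dvd one_pos this
  omega

section deg
variable {c tn : ℕ} (h3 : 3 ≤ tn) (hc : 2 ≤ c)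

/-- same-block neighbors -/
private def Ablk (c tn : ℕ) (v : Fin (c * tn)) : Finset (Fin (c * tn)) :=
  Finset.univ.filter fun j => j.val / tn = v.val / tn ∧ j ≠ v

/-- bridge neighbors -/
private def Bblk (c tn : ℕ) (v : Fin (c * tn)) : Finset (Fin (c * tn)) :=
  Finset.univ.filter fun j => (j.val = v.val + 1 ∧ (v.val + 1) % tn = 0) ∨
    (v.val = j.val + 1 ∧ (j.val + 1) % tn = 0)

include h3 in
lemma bridge_ne_block {v j : Fin (c * tn)}
    (hj : (j.val = v.val + 1 ∧ (v.val + 1) % tn = 0) ∨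
      (v.val = j.val + 1 ∧ (j.val + 1) % tn = 0)) :
    j.val / tn ≠ v.val / tn := by
  have htn : 0 < tn := by omega
  rcases hj with ⟨he, hm⟩ | ⟨he, hm⟩
  · obtain ⟨e1, e2, e3⟩ := mod_succ_div htn hm
    rw [he]; omega
  · obtain ⟨e1, e2, e3⟩ := mod_succ_div htn hm
    rw [he]; omega

lemma neighborFinset_eq (v : Fin (c * tn)) :
    (cBarbell c tn).neighborFinset v = Ablk c tn v ∪ Bblk c tn v := by
  ext j
  rw [SimpleGraph.mem_neighborFinset, Finset.mem_union]
  unfold Ablk Bblk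
  simp only [Finset.mem_filter, Finset.mem_univ, true_and]
  constructor
  · rintro ⟨hne, hs | hb | hb⟩
    · exact Or.inl ⟨hs.symm, fun he => hne (he ▸ rfl)⟩
    · exact Or.inr (Or.inl hb)
    · exact Or.inr (Or.inr hb)
  · rintro (⟨hs, hne⟩ | hb)
    · exact ⟨fun he => hne (he ▸ rfl), Or.inl hs.symm⟩
    · refine ⟨?_, Or.inr hb⟩
      intro he
      rcases hb with ⟨he2, _⟩ | ⟨he2, _⟩ <;> (rw [he] at he2; omega)

include h3 in
lemma Ablk_card (v : Fin (c * tn)) : (Ablk c tn v).card = tn - 1 := by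
  have htn : 0 < tn := by omega
  have hk : v.val / tn < c := (Nat.div_lt_iff_lt_mul htn).mpr v.isLt
  have : Ablk c tn v = (Finset.univ.filter fun j : Fin (c * tn) =>
      j.val / tn = v.val / tn).erase v := by
    ext j
    unfold Ablk
    simp only [Finset.mem_filter, Finset.mem_univ, true_and, Finset.mem_erase]
    tauto
  rw [this, Finset.card_erase_of_mem (by simp), block_card c tn htn hk]

include h3 in
lemma Bblk_card_le (v : Fin (c * tn)) : (Bblk c tn v).card ≤ 1 := by
  rw [Finset.card_le_one]
  intro a ha b hb
  unfold Bblk at ha hb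
  simp only [Finset.mem_filter, Finset.mem_univ, true_and] at ha hb
  rcases ha with ⟨e1, m1⟩ | ⟨e1, m1⟩ <;> rcases hb with ⟨e2, m2⟩ | ⟨e2, m2⟩
  · exact Fin.ext (by omega)
  · have hv0 : v.val % tn = 0 := by rw [e2]; exact m2
    exact (not_both_bridge h3 m1 hv0).elim
  · have hv0 : v.val % tn = 0 := by rw [e1]; exact m1
    exact (not_both_bridge h3 m2 hv0).elim
  · exact Fin.ext (by omega)

include h3 in
lemma degree_le_tn (v : Fin (c * tn)) : (cBarbell c tn).degree v ≤ tn := by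
  rw [SimpleGraph.degree, neighborFinset_eq]
  calc (Ablk c tn v ∪ Bblk c tn v).card ≤ (Ablk c tn v).card + (Bblk c tn v).card :=
        Finset.card_union_le _ _
    _ ≤ (tn - 1) + 1 := by
        have := Ablk_card h3 v; have := Bblk_card_le h3 v; omega
    _ ≤ tn := by omega

include h3 in
lemma degree_eq_tn (v : Fin (c * tn))
    (hv : ((v.val + 1) % tn = 0 ∧ v.val + 1 < c * tn) ∨ (v.val % tn = 0 ∧ 0 < v.val)) :
    (cBarbell c tn).degree v = tn := by
  refine le_antisymm (degree_le_tn h3 v) ?_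
  rw [SimpleGraph.degree, neighborFinset_eq]
  have hdisj : Disjoint (Ablk c tn v) (Bblk c tn v) := by
    rw [Finset.disjoint_left]
    intro j hj1 hj2
    unfold Ablk at hj1; unfold Bblk at hj2
    simp only [Finset.mem_filter, Finset.mem_univ, true_and] at hj1 hj2
    exact bridge_ne_block h3 hj2 hj1.1
  rw [Finset.card_union_of_disjoint hdisj, Ablk_card h3 v]
  have hB : 1 ≤ (Bblk c tn v).card := by
    refine Finset.card_pos.mpr ?_
    rcases hv with ⟨hm, hlt⟩ | ⟨hm, hpos⟩
    · exact ⟨⟨v.val + 1, hlt⟩, by unfold Bblk; simp [hm]⟩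
    · refine ⟨⟨v.val - 1, by have := v.isLt; omega⟩, ?_⟩
      unfold Bblk
      simp only [Finset.mem_filter, Finset.mem_univ, true_and]
      right
      constructor
      · omega
      · have : v.val - 1 + 1 = v.val := by omega
        rw [this]; exact hm
  omega
end deg

section generic
variable {c tn : ℕ}

lemma barbell_adj_cross (h3 : 3 ≤ tn) {q : ℕ} (hq1 : 1 ≤ q) (hqc : q < c)
    {i j : Fin (c * tn)} (hi : i.val < q * tn) (hj : ¬ j.val < q * tn)
    (hadj : (cBarbell c tn).Adj i j) :
    i.val = q * tn - 1 ∧ j.val = q * tn := by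
  have htn : 0 < tn := by omega
  obtain ⟨hne, hcase⟩ := hadj
  rcases hcase with hs | ⟨he, hm⟩ | ⟨he, hm⟩
  · exfalso
    have h1 : i.val / tn < q := (Nat.div_lt_iff_lt_mul htn).mpr hi
    have h2 : q ≤ j.val / tn := (Nat.le_div_iff_mul_le htn).mpr (by omega)
    omega
  · omega
  · omega

lemma barbell_isLeast (hc : 2 ≤ c) (h3 : 3 ≤ tn)
    (W : Matrix (Fin (c * tn)) (Fin (c * tn)) ℝ) (β γ : ℝ)
    (hβ : 0 < β) (hγ : 0 < γ)
    (hnn : ∀ i j : Fin (c * tn), i ≠ j → 0 ≤ W i j)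
    (h0 : ∀ i j : Fin (c * tn), i ≠ j → ¬ (cBarbell c tn).Adj i j → W i j = 0)
    (hcl : ∀ i j : Fin (c * tn), (cBarbell c tn).Adj i j → i.val / tn = j.val / tn → β ≤ W i j)
    (hbr : ∀ i j : Fin (c * tn), (cBarbell c tn).Adj i j → i.val / tn ≠ j.val / tn → W i j = γ)
    (harith : γ * ((c * tn / 2 : ℕ) : ℝ) ≤ ((tn : ℝ) - 1) * β * (((c / 2 : ℕ) : ℝ) * tn)) :
    IsLeast (conductanceValues W) (γ / (((c / 2 : ℕ) : ℝ) * tn)) := by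
  classical
  have htn : 0 < tn := by omega
  set q : ℕ := c / 2 with hqdef
  have hq1 : 1 ≤ q := by omega
  have hqc : q < c := by omega
  have hqtn_lt : q * tn < c * tn := (Nat.mul_lt_mul_right htn).mpr hqc
  have hqtn_pos : 0 < q * tn := by positivity
  have hqtnR : (0 : ℝ) < (q : ℝ) * tn := by positivity
  constructor
  · -- membership: S0 = first q blocks
    set S0 : Finset (Fin (c * tn)) :=
      Finset.univ.filter (fun i => i.val < q * tn) with hS0def
    set a : Fin (c * tn) := ⟨q * tn - 1, by omega⟩ with hadef
    set b : Fin (c * tn) := ⟨q * tn, hqtn_lt⟩ with hbdef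
    have haS0 : a ∈ S0 := by
      rw [hS0def]; simp only [Finset.mem_filter, Finset.mem_univ, true_and]; show q * tn - 1 < q * tn; omega
    have hbS0 : b ∉ S0 := by
      rw [hS0def]; simp only [Finset.mem_filter, Finset.mem_univ, true_and]; show ¬ q * tn < q * tn; omega
    have hbS0c : b ∈ S0ᶜ := Finset.mem_compl.mpr hbS0
    have hadjab : (cBarbell c tn).Adj a b := by
      refine ⟨?_, Or.inr (Or.inl ⟨?_, ?_⟩)⟩
      · intro he
        have : a.val = b.val := by rw [he]
        simp only [hadef, hbdef] at this
        omega
      · simp only [hadef, hbdef]; omega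
      · have : a.val + 1 = q * tn := by simp only [hadef]; omega
        rw [this]; exact Nat.mul_mod_left q tn
    have hblk_ab : a.val / tn ≠ b.val / tn := by
      have hb' : b.val / tn = q := by
        refine (nat_div_eq_iff htn).mpr ?_
        simp only [hbdef]; omega
      have ha' : a.val / tn = q - 1 := by
        refine (nat_div_eq_iff htn).mpr ?_
        have e1 : (q - 1) * tn = q * tn - tn := by rw [Nat.sub_mul, one_mul]
        simp only [hadef]; omega
      omega
    have hWab : W a b = γ := hbr a b hadjab hblk_ab
    have hcut : (∑ i ∈ S0, ∑ j ∈ S0ᶜ, W i j) = γ := by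
      rw [Finset.sum_eq_single_of_mem a haS0, Finset.sum_eq_single_of_mem b hbS0c, hWab]
      · intro j hj hjb
        have hjS0 : ¬ j.val < q * tn := by
          have := Finset.mem_compl.mp hj
          rw [hS0def] at this
          simpa using this
        have haj : a ≠ j := by
          intro he; rw [← he] at hjS0; simp only [hadef] at hjS0; omega
        refine h0 a j haj ?_
        intro hadj
        obtain ⟨e1, e2⟩ := barbell_adj_cross h3 hq1 hqc (by simp only [hadef]; omega) hjS0 hadj
        exact hjb (Fin.ext (by simp only [hbdef]; omega))
      · intro i hi hia
        have hiS0 : i.val < q * tn := by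
          rw [hS0def] at hi; simpa using hi
        refine Finset.sum_eq_zero fun j hj => ?_
        have hjS0 : ¬ j.val < q * tn := by
          have := Finset.mem_compl.mp hj
          rw [hS0def] at this; simpa using this
        have hij : i ≠ j := by intro he; rw [he] at hiS0; exact hjS0 hiS0
        refine h0 i j hij fun hadj => ?_
        obtain ⟨e1, e2⟩ := barbell_adj_cross h3 hq1 hqc hiS0 hjS0 hadj
        exact hia (Fin.ext (by simp only [hadef]; omega))
    have hcard : S0.card = q * tn := card_lt_filter c tn (q * tn) (le_of_lt hqtn_lt)
    refine ⟨S0, ⟨a, haS0⟩, ?_, ?_⟩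
    · intro he; rw [he] at hbS0; exact hbS0 (Finset.mem_univ b)
    · rw [hcut, hcard]
      have hmin : min (q * tn) (c * tn - q * tn) = q * tn := by
        refine min_eq_left ?_
        have h1 : 2 * q ≤ c := by omega
        have h2 : (2 * q) * tn ≤ c * tn := Nat.mul_le_mul_right tn h1
        have h3 : (2 * q) * tn = 2 * (q * tn) := by ring
        omega
      rw [hmin]
      push_cast
      ring
  · -- lower bound
    rintro x ⟨S, hS1, hS2, rfl⟩
    have hs1 : 1 ≤ S.card := hS1.card_pos
    have hslt : S.card < c * tn := by
      have h := Finset.card_lt_card (Finset.ssubset_univ_iff.mpr hS2)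
      simpa using h
    set s := S.card with hsdef
    set m := min s (c * tn - s) with hmdef
    have hm1 : 1 ≤ m := by omega
    have hm2 : m ≤ c * tn / 2 := by omega
    have hmR : (0 : ℝ) < (m : ℝ) := by exact_mod_cast hm1
    rw [le_div_iff₀ hmR]
    have hγq : 0 ≤ γ / ((q : ℝ) * tn) := le_of_lt (div_pos hγ hqtnR)
    -- nonnegativity of inner sums
    have hinner_nn : ∀ i ∈ S, 0 ≤ ∑ j ∈ Sᶜ, W i j := by
      intro i hi
      refine Finset.sum_nonneg fun j hj => hnn i j ?_
      intro he; rw [he] at hi; exact (Finset.mem_compl.mp hj) hi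
    by_cases hsplit : ∃ i j : Fin (c * tn), i ∈ S ∧ j ∉ S ∧ i.val / tn = j.val / tn
    · -- a block is split
      obtain ⟨i0, j0, hi0, hj0, hblk⟩ := hsplit
      set k := i0.val / tn with hkdef
      have hk : k < c := (Nat.div_lt_iff_lt_mul htn).mpr i0.isLt
      set T1 := S.filter (fun i => i.val / tn = k) with hT1def
      set T2 := Sᶜ.filter (fun j => j.val / tn = k) with hT2def
      have hi0T : i0 ∈ T1 := Finset.mem_filter.mpr ⟨hi0, rfl⟩
      have hj0T : j0 ∈ T2 := Finset.mem_filter.mpr ⟨Finset.mem_compl.mpr hj0, hblk.symm⟩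
      have ha1 : 1 ≤ T1.card := Finset.card_pos.mpr ⟨i0, hi0T⟩
      have ha2 : 1 ≤ T2.card := Finset.card_pos.mpr ⟨j0, hj0T⟩
      have hsum12 : T1.card + T2.card = tn := by
        have e1 : T1 = (Finset.univ.filter fun j : Fin (c * tn) => j.val / tn = k).filter
            (fun x => x ∈ S) := by
          ext x
          simp only [hT1def, Finset.mem_filter, Finset.mem_univ, true_and]
          tauto
        have e2 : T2 = (Finset.univ.filter fun j : Fin (c * tn) => j.val / tn = k).filter
            (fun x => ¬ x ∈ S) := by
          ext x
          simp only [hT2def, Finset.mem_filter, Finset.mem_univ, true_and, Finset.mem_compl]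
          tauto
        rw [e1, e2, Finset.card_filter_add_card_filter_not, block_card c tn htn hk]
      -- cut ≥ sum over T1 × T2
      have step1 : ∑ i ∈ T1, ∑ j ∈ T2, W i j ≤ ∑ i ∈ S, ∑ j ∈ Sᶜ, W i j := by
        calc ∑ i ∈ T1, ∑ j ∈ T2, W i j ≤ ∑ i ∈ T1, ∑ j ∈ Sᶜ, W i j := by
              refine Finset.sum_le_sum fun i hi => ?_
              have hiS : i ∈ S := (Finset.mem_filter.mp hi).1
              refine Finset.sum_le_sum_of_subset_of_nonneg (Finset.filter_subset _ _) ?_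
              intro j hj _
              refine hnn i j fun he => ?_
              rw [he] at hiS; exact (Finset.mem_compl.mp hj) hiS
          _ ≤ ∑ i ∈ S, ∑ j ∈ Sᶜ, W i j := by
              refine Finset.sum_le_sum_of_subset_of_nonneg (Finset.filter_subset _ _) ?_
              intro i hi _
              exact hinner_nn i hi
      have step2 : (T1.card : ℝ) * (T2.card : ℝ) * β ≤ ∑ i ∈ T1, ∑ j ∈ T2, W i j := by
        have : ∀ i ∈ T1, ∀ j ∈ T2, β ≤ W i j := by
          intro i hi j hj
          obtain ⟨hiS, hik⟩ := Finset.mem_filter.mp hi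
          obtain ⟨hjS, hjk⟩ := Finset.mem_filter.mp hj
          have hij : i ≠ j := by
            intro he; rw [he] at hiS; exact (Finset.mem_compl.mp hjS) hiS
          exact hcl i j ⟨hij, Or.inl (by rw [hik, hjk])⟩ (by rw [hik, hjk])
        calc (T1.card : ℝ) * (T2.card : ℝ) * β = ∑ _i ∈ T1, ∑ _j ∈ T2, β := by
              rw [Finset.sum_const, Finset.sum_const]; push_cast; ring
          _ ≤ ∑ i ∈ T1, ∑ j ∈ T2, W i j := by
              refine Finset.sum_le_sum fun i hi => Finset.sum_le_sum fun j hj => this i hi j hj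
      have step3 : ((tn : ℝ) - 1) * β ≤ (T1.card : ℝ) * (T2.card : ℝ) * β := by
        refine mul_le_mul_of_nonneg_right ?_ (le_of_lt hβ)
        have c1 : (1 : ℝ) ≤ (T1.card : ℝ) := by exact_mod_cast ha1
        have c2 : (1 : ℝ) ≤ (T2.card : ℝ) := by exact_mod_cast ha2
        have c3 : (T1.card : ℝ) + (T2.card : ℝ) = (tn : ℝ) := by exact_mod_cast hsum12
        nlinarith
      have step0 : γ / ((q : ℝ) * tn) * m ≤ ((tn : ℝ) - 1) * β := by
        rw [div_mul_eq_mul_div, div_le_iff₀ hqtnR]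
        calc γ * (m : ℝ) ≤ γ * ((c * tn / 2 : ℕ) : ℝ) := by
              refine mul_le_mul_of_nonneg_left ?_ (le_of_lt hγ)
              exact_mod_cast hm2
          _ ≤ ((tn : ℝ) - 1) * β * (((q : ℕ) : ℝ) * tn) := harith
      linarith
    · -- S is a union of blocks
      push_neg at hsplit
      have hblocks : ∀ i j : Fin (c * tn), i ∈ S → i.val / tn = j.val / tn → j ∈ S := by
        intro i j hi he
        by_contra hj
        exact (hsplit i j hi hj) he
      set P : ℕ → Prop := fun k => ∀ i : Fin (c * tn), i.val / tn = k → i ∈ S with hPdef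
      obtain ⟨i0, hi0⟩ := hS1
      obtain ⟨j0, hj0⟩ : ∃ j0, j0 ∉ S := by
        by_contra h
        push_neg at h
        exact hS2 (Finset.eq_univ_iff_forall.mpr h)
      have hPnot : ∀ k', ¬ P k' → ∀ i : Fin (c * tn), i ∈ S → i.val / tn ≠ k' := by
        intro k' hk' i hiS hik
        exact hk' fun j hj => hblocks i j hiS (by rw [hik, hj])
      have hP0 : P (i0.val / tn) := fun i hi => hblocks i0 i hi0 hi.symm
      have hP1 : ¬ P (j0.val / tn) := fun h => hj0 (h j0 rfl)
      have hk0c : i0.val / tn < c := (Nat.div_lt_iff_lt_mul htn).mpr i0.isLt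
      have hk1c : j0.val / tn < c := (Nat.div_lt_iff_lt_mul htn).mpr j0.isLt
      have hne01 : i0.val / tn ≠ j0.val / tn := fun h => hP1 (h ▸ hP0)
      -- find an adjacent flip k, k+1 < c with P k ≠ P (k+1)
      have hflip : ∃ k, k + 1 < c ∧ ((P k ∧ ¬ P (k + 1)) ∨ (¬ P k ∧ P (k + 1))) := by
        rcases lt_or_gt_of_ne hne01 with h | h
        · obtain ⟨k, _, hk2, hk3, hk4⟩ := flip_lemma h hP0 hP1
          exact ⟨k, by omega, Or.inl ⟨hk3, hk4⟩⟩
        · obtain ⟨k, _, hk2, hk3, hk4⟩ :=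
            flip_lemma (P := fun k => ¬ P k) h hP1 (not_not_intro hP0)
          exact ⟨k, by omega, Or.inr ⟨hk3, not_not.mp hk4⟩⟩
      obtain ⟨k, hkc, hPk⟩ := hflip
      set u : Fin (c * tn) := ⟨(k + 1) * tn - 1, by
        have : (k + 1) * tn ≤ c * tn := Nat.mul_le_mul_right tn (by omega)
        omega⟩ with hudef
      set v : Fin (c * tn) := ⟨(k + 1) * tn, (Nat.mul_lt_mul_right htn).mpr hkc⟩ with hvdef
      have hktn : 1 ≤ (k + 1) * tn := by
        have := Nat.mul_le_mul_right tn (show 1 ≤ k + 1 by omega)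
        omega
      have hu_blk : u.val / tn = k := by
        refine (nat_div_eq_iff htn).mpr ?_
        have : (k + 1) * tn = k * tn + tn := by ring
        simp only [hudef]; omega
      have hv_blk : v.val / tn = k + 1 := by
        refine (nat_div_eq_iff htn).mpr ?_
        have : (k + 1 + 1) * tn = (k + 1) * tn + tn := by ring
        simp only [hvdef]; omega
      have hadjuv : (cBarbell c tn).Adj u v := by
        refine ⟨?_, Or.inr (Or.inl ⟨?_, ?_⟩)⟩
        · intro he
          have : u.val = v.val := by rw [he]
          simp only [hudef, hvdef] at this; omega
        · simp only [hudef, hvdef]; omega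
        · have : u.val + 1 = (k + 1) * tn := by simp only [hudef]; omega
          rw [this]; exact Nat.mul_mod_left _ _
      have hblkuv : u.val / tn ≠ v.val / tn := by omega
      -- the cut contains the bridge weight γ
      have hcutγ : γ ≤ ∑ i ∈ S, ∑ j ∈ Sᶜ, W i j := by
        rcases hPk with ⟨hPa, hPb⟩ | ⟨hPa, hPb⟩
        · have huS : u ∈ S := hPa u hu_blk
          have hvS : v ∉ S := fun hv => (hPnot _ hPb v hv) hv_blk
          have t1 : W u v ≤ ∑ j ∈ Sᶜ, W u j := by
            refine Finset.single_le_sum (fun j hj => hnn u j ?_) (Finset.mem_compl.mpr hvS)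
            intro he; rw [he] at huS; exact (Finset.mem_compl.mp hj) huS
          have t2 : ∑ j ∈ Sᶜ, W u j ≤ ∑ i ∈ S, ∑ j ∈ Sᶜ, W i j :=
            Finset.single_le_sum hinner_nn huS
          rw [← hbr u v hadjuv hblkuv]
          linarith
        · have hvS : v ∈ S := hPb v hv_blk
          have huS : u ∉ S := fun hu => (hPnot _ hPa u hu) hu_blk
          have t1 : W v u ≤ ∑ j ∈ Sᶜ, W v j := by
            refine Finset.single_le_sum (fun j hj => hnn v j ?_) (Finset.mem_compl.mpr huS)
            intro he; rw [he] at hvS; exact (Finset.mem_compl.mp hj) hvS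
          have t2 : ∑ j ∈ Sᶜ, W v j ≤ ∑ i ∈ S, ∑ j ∈ Sᶜ, W i j :=
            Finset.single_le_sum hinner_nn hvS
          rw [← hbr v u ((cBarbell c tn).adj_symm hadjuv) (Ne.symm hblkuv)]
          linarith
      -- m ≤ q * tn
      have hmle : m ≤ q * tn := by
        set t := ((Finset.range c).filter P).card with htdef
        have ht_le : t ≤ c := le_trans (Finset.card_filter_le _ _) (by simp)
        have hscard : s = tn * t := by
          have e0 : s = ∑ k' ∈ Finset.range c,
              (S.filter (fun i : Fin (c * tn) => i.val / tn = k')).card := by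
            refine Finset.card_eq_sum_card_fiberwise fun i _ => ?_
            exact Finset.mem_range.mpr ((Nat.div_lt_iff_lt_mul htn).mpr i.isLt)
          have e1 : ∀ k' ∈ Finset.range c,
              (S.filter (fun i : Fin (c * tn) => i.val / tn = k')).card
                = if P k' then tn else 0 := by
            intro k' hk'
            by_cases hp : P k'
            · rw [if_pos hp]
              have : S.filter (fun i : Fin (c * tn) => i.val / tn = k')
                  = Finset.univ.filter (fun i : Fin (c * tn) => i.val / tn = k') := by
                ext x
                simp only [Finset.mem_filter, Finset.mem_univ, true_and]
                exact ⟨fun h => h.2, fun h => ⟨hp x h, h⟩⟩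
              rw [this, block_card c tn htn (Finset.mem_range.mp hk')]
            · rw [if_neg hp]
              rw [Finset.card_eq_zero]
              refine Finset.filter_eq_empty_iff.mpr fun x hx => ?_
              exact hPnot k' hp x hx
          rw [e0, Finset.sum_congr rfl e1, ← Finset.sum_filter, Finset.sum_const,
            smul_eq_mul, mul_comm]
        by_cases hts : t ≤ q
        · calc m ≤ s := Nat.min_le_left _ _
            _ = tn * t := hscard
            _ ≤ tn * q := Nat.mul_le_mul_left tn hts
            _ = q * tn := mul_comm _ _
        · have htq : c - t ≤ q := by omega
          calc m ≤ c * tn - s := Nat.min_le_right _ _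
            _ = c * tn - tn * t := by rw [hscard]
            _ ≤ tn * (c - t) := by
                have e : tn * (c - t) + tn * t = tn * c := by
                  rw [← Nat.mul_add]; congr 1; omega
                have e2 : tn * c = c * tn := mul_comm _ _
                omega
            _ ≤ tn * q := Nat.mul_le_mul_left tn htq
            _ = q * tn := mul_comm _ _
      calc γ / ((q : ℝ) * tn) * m ≤ γ / ((q : ℝ) * tn) * ((q : ℝ) * tn) := by
            refine mul_le_mul_of_nonneg_left ?_ hγq
            have : (m : ℝ) ≤ ((q * tn : ℕ) : ℝ) := by exact_mod_cast hmle
            push_cast at this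
            exact this
        _ = γ := div_mul_cancel₀ γ (ne_of_gt hqtnR)
        _ ≤ ∑ i ∈ S, ∑ j ∈ Sᶜ, W i j := hcutγ
end generic

section inst
variable {c tn : ℕ}

lemma gossipUnif_offdiag {n : ℕ} (G : SimpleGraph (Fin n)) [DecidableRel G.Adj]
    {i j : Fin n} (h : i ≠ j) :
    gossipUnif G i j = (1 / 2) * (probUnif G i j + probUnif G j i) := by
  simp only [gossipUnif, Matrix.add_apply, Matrix.sub_apply, Matrix.smul_apply,
    Matrix.one_apply_ne h, Matrix.diagonal_apply_ne _ h, Matrix.transpose_apply,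
    smul_eq_mul]
  ring

lemma gossipRes_offdiag {i j : Fin (c * tn)} (h : i ≠ j) :
    gossipResCBarbell c tn i j = probResCBarbell c tn i j := by
  simp only [gossipResCBarbell, Matrix.add_apply, Matrix.sub_apply, Matrix.smul_apply,
    Matrix.one_apply_ne h, Matrix.diagonal_apply_ne _ h, smul_eq_mul]
  ring

lemma probUnif_apply {n : ℕ} (G : SimpleGraph (Fin n)) [DecidableRel G.Adj] (i j : Fin n) :
    probUnif G i j = if G.Adj i j then 1 / ((n : ℝ) * (G.degree i : ℝ)) else 0 := rfl

lemma probRes_apply (i j : Fin (c * tn)) :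
    probResCBarbell c tn i j = if (cBarbell c tn).Adj i j then
      (if i.val / tn = j.val / tn then 1 / ((tn : ℝ) * ((c : ℝ) * (tn : ℝ) - 1))
       else 1 / (2 * ((c : ℝ) * (tn : ℝ) - 1))) else 0 := rfl

lemma unif_isLeast (hc : 2 ≤ c) (h3 : 3 ≤ tn) :
    IsLeast (conductanceValues (gossipUnif (cBarbell c tn)))
      ((1 / (((c * tn : ℕ) : ℝ) * tn)) / (((c / 2 : ℕ) : ℝ) * tn)) := by
  have htn : 0 < tn := by omega
  have hNpos : (0 : ℝ) < ((c * tn : ℕ) : ℝ) := by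
    have : 0 < c * tn := by positivity
    exact_mod_cast this
  have htnR : (0 : ℝ) < (tn : ℝ) := by exact_mod_cast htn
  set β : ℝ := 1 / (((c * tn : ℕ) : ℝ) * tn) with hβdef
  have hβpos : 0 < β := by rw [hβdef]; positivity
  have hdeg_pos : ∀ i j : Fin (c * tn), (cBarbell c tn).Adj i j →
      (0 : ℝ) < ((cBarbell c tn).degree i : ℝ) := by
    intro i j h
    have : 0 < (cBarbell c tn).degree i :=
      ((cBarbell c tn).degree_pos_iff_exists_adj i).mpr ⟨j, h⟩
    exact_mod_cast this
  have hterm : ∀ i j : Fin (c * tn), (cBarbell c tn).Adj i j →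
      β ≤ probUnif (cBarbell c tn) i j := by
    intro i j h
    rw [probUnif_apply, if_pos h, hβdef]
    have h1 : (0 : ℝ) < ((c * tn : ℕ) : ℝ) * ((cBarbell c tn).degree i : ℝ) :=
      mul_pos hNpos (hdeg_pos i j h)
    refine one_div_le_one_div_of_le h1 ?_
    refine mul_le_mul_of_nonneg_left ?_ (le_of_lt hNpos)
    exact_mod_cast degree_le_tn h3 i
  have hterm_nn : ∀ i j : Fin (c * tn), 0 ≤ probUnif (cBarbell c tn) i j := by
    intro i j
    rw [probUnif_apply]
    split
    · next h => exact le_of_lt (one_div_pos.mpr (mul_pos hNpos (hdeg_pos i j h)))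
    · exact le_refl 0
  refine barbell_isLeast hc h3 (gossipUnif (cBarbell c tn)) β β hβpos hβpos ?_ ?_ ?_ ?_ ?_
  · -- nonneg
    intro i j hij
    rw [gossipUnif_offdiag _ hij]
    have := hterm_nn i j
    have := hterm_nn j i
    linarith
  · -- zero off non-edges
    intro i j hij hadj
    rw [gossipUnif_offdiag _ hij, probUnif_apply, probUnif_apply, if_neg hadj,
      if_neg (fun h => hadj ((cBarbell c tn).adj_symm h))]
    ring
  · -- clique lower bound
    intro i j hadj _
    rw [gossipUnif_offdiag _ hadj.ne]
    have h1 := hterm i j hadj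
    have h2 := hterm j i ((cBarbell c tn).adj_symm hadj)
    linarith
  · -- bridge exact value
    intro i j hadj hdiff
    have hij := hadj.ne
    have hdegs : (cBarbell c tn).degree i = tn ∧ (cBarbell c tn).degree j = tn := by
      rcases hadj.2 with hs | ⟨he, hm⟩ | ⟨he, hm⟩
      · exact absurd hs hdiff
      · constructor
        · refine degree_eq_tn h3 i (Or.inl ⟨hm, ?_⟩)
          have := j.isLt; omega
        · refine degree_eq_tn h3 j (Or.inr ⟨?_, ?_⟩) <;> (rw [he]; try exact hm)
          omega
      · constructor
        · refine degree_eq_tn h3 i (Or.inr ⟨?_, ?_⟩) <;> (rw [he]; try exact hm)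
          omega
        · refine degree_eq_tn h3 j (Or.inl ⟨hm, ?_⟩)
          have := i.isLt; omega
    rw [gossipUnif_offdiag _ hij, probUnif_apply, probUnif_apply, if_pos hadj,
      if_pos ((cBarbell c tn).adj_symm hadj), hdegs.1, hdegs.2, hβdef]
    ring
  · -- arithmetic
    have hq2 : 2 * (c / 2) ≤ c := by omega
    have hq1 : 1 ≤ c / 2 := by omega
    have f1 : c * tn ≤ (4 * (c / 2)) * tn := Nat.mul_le_mul_right tn (by omega)
    have f2 : (4 * (c / 2)) * tn = 2 * (2 * ((c / 2) * tn)) := by ring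
    have f3 : 2 * ((c / 2) * tn) ≤ (tn - 1) * ((c / 2) * tn) :=
      Nat.mul_le_mul_right ((c / 2) * tn) (by omega)
    have key : c * tn / 2 ≤ (tn - 1) * ((c / 2) * tn) := by omega
    have keyR : ((c * tn / 2 : ℕ) : ℝ) ≤ ((tn : ℝ) - 1) * (((c / 2 : ℕ) : ℝ) * tn) := by
      have := (Nat.cast_le (α := ℝ)).mpr key
      push_cast at this
      rw [Nat.cast_sub (by omega : 1 ≤ tn)] at this
      push_cast at this
      linarith [this]
    calc β * ((c * tn / 2 : ℕ) : ℝ) ≤ β * (((tn : ℝ) - 1) * (((c / 2 : ℕ) : ℝ) * tn)) :=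
          mul_le_mul_of_nonneg_left keyR (le_of_lt hβpos)
      _ = ((tn : ℝ) - 1) * β * (((c / 2 : ℕ) : ℝ) * tn) := by ring

lemma res_isLeast (hc : 2 ≤ c) (h3 : 3 ≤ tn) :
    IsLeast (conductanceValues (gossipResCBarbell c tn))
      ((1 / (2 * ((c : ℝ) * (tn : ℝ) - 1))) / (((c / 2 : ℕ) : ℝ) * tn)) := by
  have htn : 0 < tn := by omega
  have hNr : (0 : ℝ) < (c : ℝ) * (tn : ℝ) - 1 := by
    have h6 : (6 : ℕ) ≤ c * tn := Nat.mul_le_mul hc h3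
    have : (6 : ℝ) ≤ (c : ℝ) * tn := by exact_mod_cast h6
    linarith
  have htnR : (0 : ℝ) < (tn : ℝ) := by exact_mod_cast htn
  set β : ℝ := 1 / ((tn : ℝ) * ((c : ℝ) * (tn : ℝ) - 1)) with hβdef
  set γ : ℝ := 1 / (2 * ((c : ℝ) * (tn : ℝ) - 1)) with hγdef
  have hβpos : 0 < β := by rw [hβdef]; positivity
  have hγpos : 0 < γ := by rw [hγdef]; positivity
  refine barbell_isLeast hc h3 (gossipResCBarbell c tn) β γ hβpos hγpos ?_ ?_ ?_ ?_ ?_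
  · intro i j hij
    rw [gossipRes_offdiag hij, probRes_apply]
    split
    · split
      · exact le_of_lt hβpos
      · exact le_of_lt hγpos
    · exact le_refl 0
  · intro i j hij hadj
    rw [gossipRes_offdiag hij, probRes_apply, if_neg hadj]
  · intro i j hadj hblk
    rw [gossipRes_offdiag hadj.ne, probRes_apply, if_pos hadj, if_pos hblk]
  · intro i j hadj hblk
    rw [gossipRes_offdiag hadj.ne, probRes_apply, if_pos hadj, if_neg hblk]
  · -- arithmetic: ⌊ctn/2⌋ ≤ 2 (c/2) (tn−1)
    obtain ⟨q', hq'⟩ : ∃ q', c / 2 = q' + 1 := ⟨c / 2 - 1, by omega⟩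
    obtain ⟨t', ht'⟩ : ∃ t', tn = t' + 3 := ⟨tn - 3, by omega⟩
    have hcle : c ≤ 2 * q' + 3 := by omega
    have key : c * tn ≤ 4 * (c / 2) * (tn - 1) + 1 := by
      rw [hq', ht']
      have e1 : t' + 3 - 1 = t' + 2 := by omega
      rw [e1]
      nlinarith [Nat.mul_le_mul_right (t' + 3) hcle]
    have keyhelp : 4 * (c / 2) * (tn - 1) = 2 * (2 * ((c / 2) * (tn - 1))) := by ring
    have key2 : c * tn / 2 ≤ 2 * ((c / 2) * (tn - 1)) := by omega
    have keyR : ((c * tn / 2 : ℕ) : ℝ) ≤ 2 * (((c / 2 : ℕ) : ℝ) * ((tn : ℝ) - 1)) := by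
      have := (Nat.cast_le (α := ℝ)).mpr key2
      push_cast [Nat.cast_sub (by omega : 1 ≤ tn)] at this
      linarith [this]
    rw [hβdef, hγdef]
    rw [div_mul_eq_mul_div, one_mul, div_le_iff₀ (by positivity)]
    have e2 : ((tn : ℝ) - 1) * (1 / ((tn : ℝ) * ((c : ℝ) * (tn : ℝ) - 1)))
        * (((c / 2 : ℕ) : ℝ) * tn) * (2 * ((c : ℝ) * (tn : ℝ) - 1))
        = 2 * (((c / 2 : ℕ) : ℝ) * ((tn : ℝ) - 1)) := by
      field_simp [show (tn : ℝ) * (c : ℝ) - 1 ≠ 0 by rw [mul_comm]; exact hNr.ne']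
    rw [e2]
    exact keyR
end inst

/-- The conductance (the minimum of `Φ_S(W)` over nonempty proper `S`) of the uniform-gossiping
chain on the `c`-barbell graph is `1/(⌊c/2⌋ c tn³)` and that of the effective-resistance
gossiping chain is `1/(2 ⌊c/2⌋ tn (c tn − 1))`. -/
theorem stmt9 (c tn : ℕ) (hc : 2 ≤ c) (htn : 3 ≤ tn) :
    IsLeast (conductanceValues (gossipUnif (cBarbell c tn)))
      (1 / (((c / 2 : ℕ) : ℝ) * (c : ℝ) * (tn : ℝ) ^ 3)) ∧
    IsLeast (conductanceValues (gossipResCBarbell c tn))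
      (1 / (2 * ((c / 2 : ℕ) : ℝ) * (tn : ℝ) * ((c : ℝ) * (tn : ℝ) - 1))) := by
  have hq1 : 1 ≤ c / 2 := by omega
  have hqR : (0 : ℝ) < ((c / 2 : ℕ) : ℝ) := by exact_mod_cast hq1
  have hcR : (0 : ℝ) < (c : ℝ) := by exact_mod_cast (by omega : 0 < c)
  have htnR : (0 : ℝ) < (tn : ℝ) := by exact_mod_cast (by omega : 0 < tn)
  have hNr : (0 : ℝ) < (c : ℝ) * (tn : ℝ) - 1 := by
    have h6 : (6 : ℝ) ≤ (c : ℝ) * tn := by exact_mod_cast Nat.mul_le_mul hc htn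
    linarith
  constructor
  · have H := unif_isLeast hc htn
    have e : (1 / (((c * tn : ℕ) : ℝ) * tn)) / (((c / 2 : ℕ) : ℝ) * tn)
        = 1 / (((c / 2 : ℕ) : ℝ) * (c : ℝ) * (tn : ℝ) ^ 3) := by
      push_cast
      field_simp
    rwa [e] at H
  · have H := res_isLeast hc htn
    have e : (1 / (2 * ((c : ℝ) * (tn : ℝ) - 1))) / (((c / 2 : ℕ) : ℝ) * tn)
        = 1 / (2 * ((c / 2 : ℕ) : ℝ) * (tn : ℝ) * ((c : ℝ) * (tn : ℝ) - 1)) := by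
      rw [div_div]
      congr 1
      ring
    rwa [e] at H
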